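/- Let G be a graph with three distinct vertices x, y, z forming a triangle such that d(x) ≤ d(y) ≤ d(z). Then {x, y, z} is a balanceable (hence feasible) set, and consequently one can delete at most (d(z)−d(y)) + (d(y)−d(x)) + max{d(z)−d(y), d(y)−d(x)} vertices of G so that x, y, z have equal degree in the resulting induced subgraph. -/
import Mathlib


/-- Degree of `v` in `G`. -/
noncomputable def deg {V : Type*} (G : SimpleGraph V) (v : V) : ℕ :=
  Nat.card ↥(G.neighborSet v)

/-- Degree of `v` in the induced subgraph `G - D` obtained by deleting the vertex set `D`. -/
noncomputable def delDeg {V : Type*} (G : SimpleGraph V) (D : Finset V) (v : V) : ℕ :=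
  Nat.card ↥(G.neighborSet v \ ↑D)
/-- `{x,y,z}` with `deg x ≤ deg y ≤ deg z` is balanceable: (C1)-(C4). -/
def Balanceable {V : Type*} (G : SimpleGraph V) (x y z : V) : Prop :=
  (¬G.Adj x y ∧ ¬G.Adj x z ∧ ¬G.Adj y z) ∨
  (G.Adj x y ∧ G.Adj x z ∧ G.Adj y z) ∨
  (G.Adj x y ∧ ¬G.Adj x z ∧ ¬G.Adj y z) ∨
  (G.Adj x y ∧ G.Adj x z ∧ ¬G.Adj y z)

/-- `{x,y,z}` with `deg x ≤ deg y ≤ deg z` is accessible: (C5)-(C8). -/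
def Accessible {V : Type*} (G : SimpleGraph V) (x y z : V) : Prop :=
  (¬G.Adj x y ∧ G.Adj x z ∧ ¬G.Adj y z ∧
    (G.neighborSet y \ G.neighborSet z).Nonempty) ∨
  (G.Adj x y ∧ ¬G.Adj x z ∧ G.Adj y z ∧
    (G.neighborSet x \ insert y (G.neighborSet y)).Nonempty) ∨
  (¬G.Adj x y ∧ ¬G.Adj x z ∧ G.Adj y z ∧
    (G.neighborSet x \ G.neighborSet y).Nonempty ∧
    (G.neighborSet x \ G.neighborSet z).Nonempty) ∨
  (¬G.Adj x y ∧ G.Adj x z ∧ G.Adj y z ∧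
    (G.neighborSet x \ insert z (G.neighborSet z)).Nonempty ∧
    (G.neighborSet y \ insert z (G.neighborSet z)).Nonempty)

/-- Feasible = balanceable or accessible. -/
def Feasible {V : Type*} (G : SimpleGraph V) (x y z : V) : Prop :=
  Balanceable G x y z ∨ Accessible G x y z


private lemma deg_eq_card {V : Type*} [Fintype V] [DecidableEq V] (G : SimpleGraph V)
    [DecidableRel G.Adj] (v : V) : deg G v = (G.neighborFinset v).card := by
  rw [deg, Nat.card_coe_set_eq, ← Set.ncard_coe_finset,
    SimpleGraph.neighborFinset_def, Set.coe_toFinset]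

private lemma delDeg_eq_card {V : Type*} [Fintype V] [DecidableEq V] (G : SimpleGraph V)
    [DecidableRel G.Adj] (D : Finset V) (v : V) :
    delDeg G D v = (G.neighborFinset v \ D).card := by
  rw [delDeg, Nat.card_coe_set_eq, ← Set.ncard_coe_finset, Finset.coe_sdiff,
    SimpleGraph.neighborFinset_def, Set.coe_toFinset]

set_option maxHeartbeats 2000000 in
/-- A triangle `{x,y,z}` with `d(x) ≤ d(y) ≤ d(z)` is balanceable, and one can delete at most
`p + q + max{p, q}` vertices (with `p = d(z)-d(y)`, `q = d(y)-d(x)`) to equate the degrees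
of `x, y, z`. -/
theorem stmt_14 {V : Type*} [Fintype V] (G : SimpleGraph V) (x y z : V)
    (hxy : G.Adj x y) (hxz : G.Adj x z) (hyz : G.Adj y z)
    (h1 : deg G x ≤ deg G y) (h2 : deg G y ≤ deg G z) :
    Balanceable G x y z ∧
    ∃ D : Finset V,
      D.card ≤ (deg G z - deg G y) + (deg G y - deg G x) +
        max (deg G z - deg G y) (deg G y - deg G x) ∧
      x ∉ D ∧ y ∉ D ∧ z ∉ D ∧
      delDeg G D x = delDeg G D y ∧ delDeg G D y = delDeg G D z := by
  classical
  refine ⟨Or.inr (Or.inl ⟨hxy, hxz, hyz⟩), ?_⟩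
  set Nx := G.neighborFinset x with hNx
  set Ny := G.neighborFinset y with hNy
  set Nz := G.neighborFinset z with hNz
  have hax : deg G x = Nx.card := deg_eq_card G x
  have hay : deg G y = Ny.card := deg_eq_card G y
  have haz : deg G z = Nz.card := deg_eq_card G z
  set a := Nx.card with ha'
  set b := Ny.card with hb'
  set c := Nz.card with hc'
  -- special memberships
  have hxNy : x ∈ Ny := by simp [hNy, hxy.symm]
  have hxNz : x ∈ Nz := by simp [hNz, hxz.symm]
  have hyNx : y ∈ Nx := by simp [hNx, hxy]
  have hyNz : y ∈ Nz := by simp [hNz, hyz.symm]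
  have hzNx : z ∈ Nx := by simp [hNx, hxz]
  have hzNy : z ∈ Ny := by simp [hNy, hyz]
  have hxNx : x ∉ Nx := by simp [hNx]
  have hyNy : y ∉ Ny := by simp [hNy]
  have hzNz : z ∉ Nz := by simp [hNz]
  -- regions
  set CB := (Nz ∩ Ny) \ Nx with hCB
  set C0 := Nz \ (Nx ∪ Ny) with hC0
  set CA := (Nz ∩ Nx) \ Ny with hCA
  set B0 := Ny \ (Nx ∪ Nz) with hB0
  have hxCB : x ∈ CB := by simp [hCB, hxNy, hxNz, hxNx]
  have hyCA : y ∈ CA := by simp [hCA, hyNx, hyNz, hyNy]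
  -- counting identities
  have key : ∀ s t : Finset V, (s \ t).card + (s ∩ t).card = s.card := by
    intro s t; exact Finset.card_sdiff_add_card_inter s t
  have I1 : c + 1 ≤ a + (C0.card + CB.card) := by
    have h1 : Nz \ Nx = C0 ∪ CB := by
      ext u; simp only [hC0, hCB, Finset.mem_sdiff, Finset.mem_union, Finset.mem_inter]; tauto
    have h2 : (Nz \ Nx).card ≤ C0.card + CB.card := by
      rw [h1]; exact Finset.card_union_le _ _
    have h3 := key Nz Nx
    have h4 := key Nx Nz
    have h5 : 0 < (Nx \ Nz).card := Finset.card_pos.mpr ⟨z, Finset.mem_sdiff.mpr ⟨hzNx, hzNz⟩⟩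
    have h6 : Nz ∩ Nx = Nx ∩ Nz := Finset.inter_comm _ _
    rw [h6] at h3
    omega
  have I2 : c + 1 ≤ b + (C0.card + CA.card) := by
    have h1 : Nz \ Ny = C0 ∪ CA := by
      ext u; simp only [hC0, hCA, Finset.mem_sdiff, Finset.mem_union, Finset.mem_inter]; tauto
    have h2 : (Nz \ Ny).card ≤ C0.card + CA.card := by
      rw [h1]; exact Finset.card_union_le _ _
    have h3 := key Nz Ny
    have h4 := key Ny Nz
    have h5 : 0 < (Ny \ Nz).card := Finset.card_pos.mpr ⟨z, Finset.mem_sdiff.mpr ⟨hzNy, hzNz⟩⟩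
    have h6 : Nz ∩ Ny = Ny ∩ Nz := Finset.inter_comm _ _
    rw [h6] at h3
    omega
  have I3 : b + 1 ≤ a + (B0.card + CB.card) := by
    have h1 : Ny \ Nx = B0 ∪ CB := by
      ext u; simp only [hB0, hCB, Finset.mem_sdiff, Finset.mem_union, Finset.mem_inter]; tauto
    have h2 : (Ny \ Nx).card ≤ B0.card + CB.card := by
      rw [h1]; exact Finset.card_union_le _ _
    have h3 := key Ny Nx
    have h4 := key Nx Ny
    have h5 : 0 < (Nx \ Ny).card := Finset.card_pos.mpr ⟨y, Finset.mem_sdiff.mpr ⟨hyNx, hyNy⟩⟩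
    have h6 : Ny ∩ Nx = Nx ∩ Ny := Finset.inter_comm _ _
    rw [h6] at h3
    omega
  have hab : a ≤ b := by rw [hax, hay] at h1; exact h1
  have hbc : b ≤ c := by rw [hay, haz] at h2; exact h2
  have hCBpos : 0 < CB.card := Finset.card_pos.mpr ⟨x, hxCB⟩
  have hCApos : 0 < CA.card := Finset.card_pos.mpr ⟨y, hyCA⟩
  clear_value a b c
  -- choose the sizes of the four deletion pieces
  obtain ⟨dcb, dc, dca, db, e1, e2, e3, e4, e5, e6, e7⟩ :
      ∃ dcb dc dca db : ℕ,
        dcb ≤ CB.card - 1 ∧ dc ≤ C0.card ∧ dca ≤ CA.card - 1 ∧ db ≤ B0.card ∧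
        dcb + dc = c - a ∧ dcb + db = (b - a) + dca ∧
        dca + db ≤ max (c - b) (b - a) := by
    rcases le_or_gt ((c - a) - C0.card) (min (b - a) (CB.card - 1)) with h | h
    · rcases le_total (b - a) (CB.card - 1) with h' | h'
      · exact ⟨b - a, (c - a) - (b - a), 0, 0, by omega, by omega, by omega, by omega,
          by omega, by omega, by omega⟩
      · exact ⟨CB.card - 1, (c - a) - (CB.card - 1), 0, (b - a) - (CB.card - 1),
          by omega, by omega, by omega, by omega, by omega, by omega, by omega⟩
    · exact ⟨(c - a) - C0.card, C0.card, ((c - a) - C0.card) - (b - a), 0,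
        by omega, by omega, by omega, by omega, by omega, by omega, by omega⟩
  -- choose the actual deletion pieces
  obtain ⟨Dcb, hDcbS, hDcbC⟩ := Finset.exists_subset_card_eq
    (le_trans e1 (le_of_eq (Finset.card_erase_of_mem hxCB).symm) : dcb ≤ (CB.erase x).card)
  obtain ⟨Dc, hDcS, hDcC⟩ := Finset.exists_subset_card_eq e2
  obtain ⟨Dca, hDcaS, hDcaC⟩ := Finset.exists_subset_card_eq
    (le_trans e3 (le_of_eq (Finset.card_erase_of_mem hyCA).symm) : dca ≤ (CA.erase y).card)
  obtain ⟨Db, hDbS, hDbC⟩ := Finset.exists_subset_card_eq e4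
  -- membership facts about the pieces
  have pCB : ∀ u ∈ Dcb, u ∈ Nz ∧ u ∈ Ny ∧ u ∉ Nx ∧ u ≠ x := by
    intro u hu
    have := hDcbS hu
    simp only [Finset.mem_erase, hCB, Finset.mem_sdiff, Finset.mem_inter] at this
    tauto
  have pC0 : ∀ u ∈ Dc, u ∈ Nz ∧ u ∉ Nx ∧ u ∉ Ny := by
    intro u hu
    have := hDcS hu
    simp only [hC0, Finset.mem_sdiff, Finset.mem_union] at this
    tauto
  have pCA : ∀ u ∈ Dca, u ∈ Nz ∧ u ∈ Nx ∧ u ∉ Ny ∧ u ≠ y := by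
    intro u hu
    have := hDcaS hu
    simp only [Finset.mem_erase, hCA, Finset.mem_sdiff, Finset.mem_inter] at this
    tauto
  have pB0 : ∀ u ∈ Db, u ∈ Ny ∧ u ∉ Nx ∧ u ∉ Nz := by
    intro u hu
    have := hDbS hu
    simp only [hB0, Finset.mem_sdiff, Finset.mem_union] at this
    tauto
  -- the three restricted neighbourhoods
  have ex : Nx \ (Dcb ∪ Dc ∪ Dca ∪ Db) = Nx \ Dca := by
    ext u
    simp only [Finset.mem_sdiff, Finset.mem_union]
    constructor
    · rintro ⟨hu, h2⟩; exact ⟨hu, fun h => h2 (Or.inl (Or.inr h))⟩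
    · rintro ⟨hu, h2⟩
      refine ⟨hu, ?_⟩
      rintro (((h | h) | h) | h)
      · exact (pCB u h).2.2.1 hu
      · exact (pC0 u h).2.1 hu
      · exact h2 h
      · exact (pB0 u h).2.1 hu
  have ey : Ny \ (Dcb ∪ Dc ∪ Dca ∪ Db) = Ny \ (Dcb ∪ Db) := by
    ext u
    simp only [Finset.mem_sdiff, Finset.mem_union]
    constructor
    · rintro ⟨hu, h2⟩; exact ⟨hu, fun h => h2 (by tauto)⟩
    · rintro ⟨hu, h2⟩
      refine ⟨hu, ?_⟩
      rintro (((h | h) | h) | h)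
      · exact h2 (Or.inl h)
      · exact (pC0 u h).2.2 hu
      · exact (pCA u h).2.2.1 hu
      · exact h2 (Or.inr h)
  have ez : Nz \ (Dcb ∪ Dc ∪ Dca ∪ Db) = Nz \ (Dcb ∪ Dc ∪ Dca) := by
    ext u
    simp only [Finset.mem_sdiff, Finset.mem_union]
    constructor
    · rintro ⟨hu, h2⟩; exact ⟨hu, fun h => h2 (by tauto)⟩
    · rintro ⟨hu, h2⟩
      refine ⟨hu, ?_⟩
      rintro (((h | h) | h) | h)
      · exact h2 (Or.inl (Or.inl h))
      · exact h2 (Or.inl (Or.inr h))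
      · exact h2 (Or.inr h)
      · exact (pB0 u h).2.2 hu
  -- cardinalities of the restricted neighbourhoods
  have cx : (Nx \ Dca).card = a - dca := by
    rw [Finset.card_sdiff_of_subset (fun u hu => (pCA u hu).2.1), hDcaC, ← ha']
  have hYsub : Dcb ∪ Db ⊆ Ny := by
    intro u hu
    rcases Finset.mem_union.mp hu with h | h
    · exact (pCB u h).2.1
    · exact (pB0 u h).1
  have hYdisj : Disjoint Dcb Db :=
    Finset.disjoint_left.mpr (fun u hu hu' => (pB0 u hu').2.2 (pCB u hu).1)
  have cy : (Ny \ (Dcb ∪ Db)).card = b - (dcb + db) := by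
    rw [Finset.card_sdiff_of_subset hYsub, Finset.card_union_of_disjoint hYdisj, hDcbC, hDbC, ← hb']
  have hZsub : Dcb ∪ Dc ∪ Dca ⊆ Nz := by
    intro u hu
    rcases Finset.mem_union.mp hu with h | h
    · rcases Finset.mem_union.mp h with h | h
      · exact (pCB u h).1
      · exact (pC0 u h).1
    · exact (pCA u h).1
  have hZdisj1 : Disjoint Dcb Dc :=
    Finset.disjoint_left.mpr (fun u hu hu' => (pC0 u hu').2.2 (pCB u hu).2.1)
  have hZdisj2 : Disjoint (Dcb ∪ Dc) Dca := by
    refine Finset.disjoint_left.mpr (fun u hu hu' => ?_)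
    rcases Finset.mem_union.mp hu with h | h
    · exact (pCA u hu').2.2.1 (pCB u h).2.1
    · exact (pC0 u h).2.1 (pCA u hu').2.1
  have cz : (Nz \ (Dcb ∪ Dc ∪ Dca)).card = c - (dcb + dc + dca) := by
    rw [Finset.card_sdiff_of_subset hZsub, Finset.card_union_of_disjoint hZdisj2,
      Finset.card_union_of_disjoint hZdisj1, hDcbC, hDcC, hDcaC, ← hc']
  have hcapy : dcb + db ≤ b := by
    have := Finset.card_le_card hYsub
    rw [Finset.card_union_of_disjoint hYdisj, hDcbC, hDbC, ← hb'] at this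
    exact this
  have hcapz : dcb + dc + dca ≤ c := by
    have := Finset.card_le_card hZsub
    rw [Finset.card_union_of_disjoint hZdisj2, Finset.card_union_of_disjoint hZdisj1,
      hDcbC, hDcC, hDcaC, ← hc'] at this
    exact this
  have hcapx : dca ≤ a := by
    have := Finset.card_le_card (fun u hu => (pCA u hu).2.1 : Dca ⊆ Nx)
    rw [hDcaC, ← ha'] at this
    exact this
  refine ⟨Dcb ∪ Dc ∪ Dca ∪ Db, ?_, ?_, ?_, ?_, ?_, ?_⟩
  · -- cardinality bound
    have hle : (Dcb ∪ Dc ∪ Dca ∪ Db).card ≤ dcb + dc + dca + db := by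
      calc (Dcb ∪ Dc ∪ Dca ∪ Db).card ≤ (Dcb ∪ Dc ∪ Dca).card + Db.card :=
            Finset.card_union_le _ _
        _ ≤ ((Dcb ∪ Dc).card + Dca.card) + Db.card := by
            have := Finset.card_union_le (Dcb ∪ Dc) Dca; omega
        _ ≤ ((Dcb.card + Dc.card) + Dca.card) + Db.card := by
            have := Finset.card_union_le Dcb Dc; omega
        _ = dcb + dc + dca + db := by rw [hDcbC, hDcC, hDcaC, hDbC]
    rw [hax, hay, haz]
    omega
  · -- x ∉ D
    simp only [Finset.mem_union]
    rintro (((h | h) | h) | h)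
    · exact (pCB x h).2.2.2 rfl
    · exact (pC0 x h).2.2 hxNy
    · exact (pCA x h).2.2.1 hxNy
    · exact (pB0 x h).2.2 hxNz
  · -- y ∉ D
    simp only [Finset.mem_union]
    rintro (((h | h) | h) | h)
    · exact hyNy (pCB y h).2.1
    · exact (pC0 y h).2.1 hyNx
    · exact (pCA y h).2.2.2 rfl
    · exact hyNy (pB0 y h).1
  · -- z ∉ D
    simp only [Finset.mem_union]
    rintro (((h | h) | h) | h)
    · exact hzNz (pCB z h).1
    · exact hzNz (pC0 z h).1
    · exact hzNz (pCA z h).1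
    · exact (pB0 z h).2.1 hzNx
  · rw [delDeg_eq_card, delDeg_eq_card, ← hNx, ← hNy, ex, ey, cx, cy]
    omega
  · rw [delDeg_eq_card, delDeg_eq_card, ← hNy, ← hNz, ey, ez, cy, cz]
    omega
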